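/- The sequence of Apéry numbers B_n is strictly 2-log-convex: for all n ≥ 1, (B_{n-1} B_{n+1} - B_n^2)(B_{n+1} B_{n+3} - B_{n+2}^2) > (B_n B_{n+2} - B_{n+1}^2)^2. -/

import Mathlib

set_option maxHeartbeats 4000000

/-- The Apéry numbers `B_n = Σ_{k=0}^n C(n,k)^2 C(n+k,k)`. -/
def aperyB (n : ℕ) : ℕ :=
  ∑ k ∈ Finset.range (n + 1), (Nat.choose n k) ^ 2 * Nat.choose (n + k) k

namespace AperyAux

noncomputable def Fq (n k : ℕ) : ℚ := (n.choose k : ℚ)^2 * ((n+k).choose k : ℚ)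
noncomputable def Gq (n k : ℕ) : ℚ :=
  ((n+1).choose (k-1) : ℚ)^2 * ((n+k).choose k : ℚ) * (k : ℚ) *
    ((k:ℚ)^2 + (6*(n:ℚ)+7)*(k:ℚ) - (11*(n:ℚ)+15)*((n:ℚ)+2)) / ((n:ℚ)+1)
lemma natq {a b : ℕ} (h : a = b) : (a:ℚ) = (b:ℚ) := by exact_mod_cast h

lemma key_top1 (n : ℕ) :
    ((n:ℚ)+2)^2 * Fq (n+2) (n+1) - (11*(n:ℚ)^2+33*(n:ℚ)+25) * Fq (n+1) (n+1)
      - ((n:ℚ)+1)^2 * Fq n (n+1) = Gq n (n+1+1) - Gq n (n+1) := by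
  have hn1 : ((n:ℚ)+1) ≠ 0 := by positivity
  have hn2 : ((n:ℚ)+2) ≠ 0 := by positivity
  have h0 : Fq n (n+1) = 0 := by
    simp [Fq, Nat.choose_eq_zero_of_lt (by omega : n < n+1)]
  rw [h0]
  have e1 : (n+2) + (n+1) = 2*n+3 := by omega
  have e2 : (n+1) + (n+1) = 2*n+2 := by omega
  have e3 : n + (n+1) = 2*n+1 := by omega
  have e4 : n + (n+2) = 2*n+2 := by omega
  have e5 : n + 1 + 1 = n + 2 := by omega
  have hs0 : (2*n+1).choose n = (2*n+1).choose (n+1) := by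
    rw [show n+1 = 2*n+1 - n from by omega, Nat.choose_symm (by omega)]
  have h1' : (2*n+2) * ((2*n+1).choose (n+1)) = (2*n+2).choose (n+1) * (n+1) := by
    have h := Nat.add_one_mul_choose_eq (2*n+1) n
    rw [hs0] at h; convert h using 2
  have hb1 := natq h1'; push_cast at hb1
  have h2' : (2*n+2).choose (n+2) * (n+2) = (2*n+2).choose (n+1) * (n+1) := by
    have h := Nat.choose_succ_right_eq (2*n+2) (n+1)
    convert h using 2 <;> omega
  have hb2 := natq h2'; push_cast at hb2
  have hs1 : (2*n+2).choose n = (2*n+2).choose (n+2) := by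
    rw [show n+2 = 2*n+2 - n from by omega, Nat.choose_symm (by omega)]
  have h3' : (2*n+3) * ((2*n+2).choose (n+2)) = (2*n+3).choose (n+1) * (n+1) := by
    have h := Nat.add_one_mul_choose_eq (2*n+2) n
    rw [hs1] at h; convert h using 2
  have hb3 := natq h3'; push_cast at hb3
  have E1 : ((2*n+2).choose (n+1) : ℚ) = (2*(n:ℚ)+2) * ((2*n+1).choose (n+1) : ℚ) / ((n:ℚ)+1) := by
    rw [eq_div_iff hn1]; linarith [hb1]
  have E2 : ((2*n+2).choose (n+2) : ℚ) = (2*(n:ℚ)+2) * ((2*n+1).choose (n+1) : ℚ) / ((n:ℚ)+2) := by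
    rw [eq_div_iff hn2]; rw [E1] at hb2; field_simp at hb2; linarith [hb2]
  have E3 : ((2*n+3).choose (n+1) : ℚ)
      = (2*(n:ℚ)+3) * ((2*(n:ℚ)+2) * ((2*n+1).choose (n+1) : ℚ)) / (((n:ℚ)+1)*((n:ℚ)+2)) := by
    rw [eq_div_iff (by positivity)]; rw [E2] at hb3; field_simp at hb3; linear_combination (-((n:ℚ)+1)) * hb3
  have hcs : (n+2).choose (n+1) = n+2 := Nat.choose_succ_self_right (n+1)
  have hcss : (n+1).choose n = n+1 := Nat.choose_succ_self_right n
  simp only [Fq, Gq, e1, e2, e3, e4, e5, hcs, hcss, Nat.choose_self, Nat.add_sub_cancel]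
  rw [E1, E2, E3]
  push_cast
  simp only [Nat.choose_self, Nat.cast_one]
  field_simp
  ring

lemma key_zero (n : ℕ) :
    ((n:ℚ)+2)^2 * Fq (n+2) 0 - (11*(n:ℚ)^2+33*(n:ℚ)+25) * Fq (n+1) 0
      - ((n:ℚ)+1)^2 * Fq n 0 = Gq n 1 - Gq n 0 := by
  have hn1 : ((n:ℚ)+1) ≠ 0 := by positivity
  simp only [Fq, Gq, Nat.choose_zero_right, Nat.choose_one_right, Nat.add_zero,
    Nat.choose_self, Nat.zero_sub, Nat.sub_self]
  push_cast
  field_simp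
  ring

lemma key_main (n k : ℕ) (hk1 : 1 ≤ k) (hkn : k ≤ n) :
    ((n:ℚ)+2)^2 * Fq (n+2) k - (11*(n:ℚ)^2+33*(n:ℚ)+25) * Fq (n+1) k
      - ((n:ℚ)+1)^2 * Fq n k = Gq n (k+1) - Gq n k := by
  have hn1 : ((n:ℚ)+1) ≠ 0 := by positivity
  have hn2 : ((n:ℚ)+2) ≠ 0 := by positivity
  have hk1' : ((k:ℚ)+1) ≠ 0 := by positivity
  have hkq : (k:ℚ) ≤ (n:ℚ) := by exact_mod_cast hkn
  have hd1 : ((n:ℚ)+1-(k:ℚ)) ≠ 0 := by intro h; nlinarith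
  have hd2 : ((n:ℚ)+2-(k:ℚ)) ≠ 0 := by intro h; nlinarith
  -- nat facts
  have f1 : (n+1).choose k * (n+1-k) = (n+1) * n.choose k := by
    rw [← Nat.choose_succ_right_eq]
    have a1 := Nat.add_one_mul_choose_eq n k
    exact a1.symm
  have f2 : (n+2).choose k * (n+2-k) = (n+2) * (n+1).choose k := by
    rw [← Nat.choose_succ_right_eq]
    have a1 := Nat.add_one_mul_choose_eq (n+1) k
    exact a1.symm
  have f3 : (n+1).choose k * k = (n+1).choose (k-1) * (n+2-k) := by
    obtain ⟨j, rfl⟩ : ∃ j, k = j+1 := ⟨k-1, by omega⟩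
    have a2 := Nat.choose_succ_right_eq (n+1) j
    have e : n+2-(j+1) = n+1-j := by omega
    simp only [Nat.add_sub_cancel, e]
    exact a2
  have f4 : (n+k+1).choose k * (n+1) = (n+k+1) * (n+k).choose k := by
    have a2 := Nat.choose_succ_right_eq (n+k+1) k
    rw [show n+k+1-k = n+1 from by omega] at a2
    rw [← a2]
    have a1 := Nat.add_one_mul_choose_eq (n+k) k
    exact a1.symm
  have f5 : (n+k+2).choose k * (n+2) = (n+k+2) * (n+k+1).choose k := by
    have a2 := Nat.choose_succ_right_eq (n+k+2) k
    rw [show n+k+2-k = n+2 from by omega] at a2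
    rw [← a2]
    have a1 := Nat.add_one_mul_choose_eq (n+k+1) k
    exact a1.symm
  have f6 : (n+k+1).choose (k+1) * (k+1) = (n+k+1) * (n+k).choose k := by
    have a1 := Nat.add_one_mul_choose_eq (n+k) k
    exact a1.symm
  -- cast with subtraction
  have c1 : ((n+1-k : ℕ) : ℚ) = (n:ℚ)+1-k := by
    have : ((n+1-k : ℕ) : ℚ) = ((n+1:ℕ):ℚ) - (k:ℚ) := Nat.cast_sub (by omega)
    rw [this]; push_cast; ring
  have c2 : ((n+2-k : ℕ) : ℚ) = (n:ℚ)+2-k := by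
    have : ((n+2-k : ℕ) : ℚ) = ((n+2:ℕ):ℚ) - (k:ℚ) := Nat.cast_sub (by omega)
    rw [this]; push_cast; ring
  have q1 := natq f1; rw [Nat.cast_mul, Nat.cast_mul, c1] at q1; push_cast at q1
  have q2 := natq f2; rw [Nat.cast_mul, Nat.cast_mul, c2] at q2; push_cast at q2
  have q3 := natq f3; rw [Nat.cast_mul, Nat.cast_mul, c2] at q3; push_cast at q3
  have q4 := natq f4; push_cast at q4
  have q5 := natq f5; push_cast at q5
  have q6 := natq f6; push_cast at q6
  set a := (n.choose k : ℚ) with ha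
  set b := ((n+k).choose k : ℚ) with hb
  have E1 : ((n+1).choose k : ℚ) = ((n:ℚ)+1) * a / ((n:ℚ)+1-k) := by
    rw [eq_div_iff hd1]; linarith
  have E2 : ((n+2).choose k : ℚ) = ((n:ℚ)+2) * (((n:ℚ)+1) * a) / (((n:ℚ)+2-k)*((n:ℚ)+1-k)) := by
    rw [eq_div_iff (mul_ne_zero hd2 hd1)]
    rw [E1] at q2; field_simp at q2; linarith
  have E3 : ((n+1).choose (k-1) : ℚ) = ((n:ℚ)+1) * a * k / (((n:ℚ)+2-k)*((n:ℚ)+1-k)) := by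
    rw [eq_div_iff (mul_ne_zero hd2 hd1)]
    rw [E1] at q3; field_simp at q3; linarith
  have E4 : ((n+k+1).choose k : ℚ) = ((n:ℚ)+(k:ℚ)+1) * b / ((n:ℚ)+1) := by
    rw [eq_div_iff hn1]; linarith
  have E5 : ((n+k+2).choose k : ℚ) = ((n:ℚ)+(k:ℚ)+2) * (((n:ℚ)+(k:ℚ)+1) * b) / (((n:ℚ)+2)*((n:ℚ)+1)) := by
    rw [eq_div_iff (mul_ne_zero hn2 hn1)]
    rw [E4] at q5; field_simp at q5; linarith
  have E6 : ((n+k+1).choose (k+1) : ℚ) = ((n:ℚ)+(k:ℚ)+1) * b / ((k:ℚ)+1) := by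
    rw [eq_div_iff hk1']; linarith
  have ekk : k + 1 - 1 = k := by omega
  have g1 : n + 1 + k = n + k + 1 := by omega
  have g2 : n + 2 + k = n + k + 2 := by omega
  have g3 : n + (k+1) = n + k + 1 := by omega
  simp only [Fq, Gq, ekk, g1, g2, g3]
  rw [E1, E2, E3, E4, E5, E6]
  push_cast
  field_simp
  ring

lemma key (n k : ℕ) (hk : k ≤ n + 2) :
    ((n:ℚ)+2)^2 * Fq (n+2) k - (11*(n:ℚ)^2+33*(n:ℚ)+25) * Fq (n+1) k
      - ((n:ℚ)+1)^2 * Fq n k = Gq n (k+1) - Gq n k := by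
  have hn1 : ((n:ℚ)+1) ≠ 0 := by positivity
  have hn2 : ((n:ℚ)+2) ≠ 0 := by positivity
  rcases Nat.eq_or_lt_of_le hk with hkeq | hklt
  · -- k = n+2
    subst hkeq
    have h0 : Fq n (n+2) = 0 := by
      simp [Fq, Nat.choose_eq_zero_of_lt (by omega : n < n+2)]
    have h1 : Fq (n+1) (n+2) = 0 := by
      simp [Fq, Nat.choose_eq_zero_of_lt (by omega : n+1 < n+2)]
    have h3 : Gq n (n+2+1) = 0 := by
      simp [Gq, Nat.choose_eq_zero_of_lt (by omega : n+1 < n+2+1-1)]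
    rw [h0, h1, h3]
    have e1 : (n+2) + (n+2) = 2*n+4 := by omega
    have e2 : n + (n+2) = 2*n+2 := by omega
    have hs1 : (2*n+2).choose n = (2*n+2).choose (n+2) := by
      rw [show n+2 = 2*n+2 - n from by omega, Nat.choose_symm (by omega)]
    have h3' : (2*n+3) * ((2*n+2).choose (n+2)) = (2*n+3).choose (n+1) * (n+1) := by
      have h := Nat.add_one_mul_choose_eq (2*n+2) n
      rw [hs1] at h
      convert h using 2 <;> omega
    have hb3 := natq h3'; push_cast at hb3
    have h4' : (2*n+4) * ((2*n+3).choose (n+1)) = (2*n+4).choose (n+2) * (n+2) := by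
      have h := Nat.add_one_mul_choose_eq (2*n+3) (n+1)
      convert h using 2 <;> omega
    have hb4 := natq h4'; push_cast at hb4
    simp only [Fq, Gq, e1, e2]
    have hck : ((n+2) - 1 : ℕ) = n+1 := by omega
    rw [hck, Nat.choose_self]
    have hsr : ((n+1).choose (n+1) : ℚ) = 1 := by rw [Nat.choose_self]; norm_num
    push_cast [hsr]
    field_simp
    nlinarith [hb3, hb4, sq_nonneg ((2*n+3).choose (n+1) : ℚ)]
  · have hk2 : k ≤ n + 1 := by omega
    rcases Nat.eq_or_lt_of_le hk2 with hkeq | hklt2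
    · subst hkeq
      exact key_top1 n
    · have hkn : k ≤ n := by omega
      rcases Nat.eq_zero_or_pos k with rfl | hk1
      · exact key_zero n
      · exact key_main n k hk1 hkn


lemma aperyB_eq_sum (n m : ℕ) (h : n + 1 ≤ m) :
    (aperyB n : ℚ) = ∑ k ∈ Finset.range m, Fq n k := by
  rw [aperyB]
  push_cast
  rw [← Finset.sum_range_add_sum_Ico _ h]
  have : ∑ k ∈ Finset.Ico (n+1) m, Fq n k = 0 := by
    apply Finset.sum_eq_zero
    intro k hk
    simp only [Finset.mem_Ico] at hk
    simp [Fq, Nat.choose_eq_zero_of_lt (by omega : n < k)]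
  rw [this]
  simp [Fq]

lemma recQ (n : ℕ) :
    ((n:ℚ)+2)^2 * (aperyB (n+2) : ℚ)
      = (11*(n:ℚ)^2+33*(n:ℚ)+25) * (aperyB (n+1) : ℚ) + ((n:ℚ)+1)^2 * (aperyB n : ℚ) := by
  have hsum : ∑ k ∈ Finset.range (n+3),
      (((n:ℚ)+2)^2 * Fq (n+2) k - (11*(n:ℚ)^2+33*(n:ℚ)+25) * Fq (n+1) k
        - ((n:ℚ)+1)^2 * Fq n k)
      = Gq n (n+3) - Gq n 0 := by
    rw [← Finset.sum_range_sub (fun k => Gq n k) (n+3)]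
    apply Finset.sum_congr rfl
    intro k hk
    simp only [Finset.mem_range] at hk
    exact key n k (by omega)
  have hG0 : Gq n 0 = 0 := by simp [Gq]
  have hGtop : Gq n (n+3) = 0 := by
    simp [Gq, Nat.choose_eq_zero_of_lt (by omega : n+1 < n+3-1)]
  rw [hG0, hGtop] at hsum
  simp only [Finset.sum_sub_distrib, ← Finset.mul_sum] at hsum
  rw [← aperyB_eq_sum n (n+3) (by omega), ← aperyB_eq_sum (n+1) (n+3) (by omega),
    ← aperyB_eq_sum (n+2) (n+3) (by omega)] at hsum
  linarith

lemma recN (n : ℕ) :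
    (n+2)^2 * aperyB (n+2) = (11*n^2+33*n+25) * aperyB (n+1) + (n+1)^2 * aperyB n := by
  have h := recQ n
  have : (((n+2)^2 * aperyB (n+2) : ℕ) : ℚ) = (((11*n^2+33*n+25) * aperyB (n+1) + (n+1)^2 * aperyB n : ℕ) : ℚ) := by
    push_cast
    linarith
  exact_mod_cast this


noncomputable def el (x s : ℝ) : ℝ :=
  (11+5*s)/2*(x^5-x^4) + (3/2+7/10*s)*x^3 + 1/25*x^2 + (1/50+23/1250*s)*x
noncomputable def up (x s : ℝ) : ℝ := el x s + 1/5
noncomputable def Br (n : ℕ) : ℝ := (aperyB n : ℝ)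

lemma lemK1 (j : ℕ) (s : ℝ) (hs2 : s^2 = 5) (hs0 : 0 < s) :
    0 < (((j:ℝ))+4)^3*(11*(((j:ℝ))+4)^2-11*(((j:ℝ))+4)+3) * up (((j:ℝ))+3) s + (((j:ℝ))+4)^3*(((j:ℝ))+3)^7 - up (((j:ℝ))+3) s * el (((j:ℝ))+4) s := by
  set y : ℝ := (j : ℝ) with hy
  have hy0 : 0 ≤ y := Nat.cast_nonneg j
  have hP : (0:ℝ) < (75263538/78125) + (205732961/156250)*y + (56548399/78125)*y^2 + (250191/1250)*y^3 + (17406/625)*y^4 + (39/25)*y^5 := by positivity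
  have hQ : (0:ℝ) ≤ (4949434/15625) + (2482961/6250)*y + (3066353/15625)*y^2 + (1483521/31250)*y^3 + (3486/625)*y^4 + (157/625)*y^5 := by positivity
  have hR : (0:ℝ) < (2602488037232944/6103515625) + (7803408281779768/6103515625)*y + (10482919291231923/6103515625)*y^2 + (8311306566389314/6103515625)*y^3 + (4308011789040701/6103515625)*y^4 + (12205849930912/48828125)*y^5 + (2991860941109/48828125)*y^6 + (20050508804/1953125)*y^7 + (2197807608/1953125)*y^8 + (5693736/78125)*y^9 + (165476/78125)*y^10 := by positivity
  have hRid : ((75263538/78125) + (205732961/156250)*y + (56548399/78125)*y^2 + (250191/1250)*y^3 + (17406/625)*y^4 + (39/25)*y^5)^2 - 5*((4949434/15625) + (2482961/6250)*y + (3066353/15625)*y^2 + (1483521/31250)*y^3 + (3486/625)*y^4 + (157/625)*y^5)^2 = (2602488037232944/6103515625) + (7803408281779768/6103515625)*y + (10482919291231923/6103515625)*y^2 + (8311306566389314/6103515625)*y^3 + (4308011789040701/6103515625)*y^4 + (12205849930912/48828125)*y^5 + (2991860941109/48828125)*y^6 + (20050508804/1953125)*y^7 + (2197807608/1953125)*y^8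 + (5693736/78125)*y^9 + (165476/78125)*y^10 := by ring
  have key : (0:ℝ) < ((75263538/78125) + (205732961/156250)*y + (56548399/78125)*y^2 + (250191/1250)*y^3 + (17406/625)*y^4 + (39/25)*y^5) - ((4949434/15625) + (2482961/6250)*y + (3066353/15625)*y^2 + (1483521/31250)*y^3 + (3486/625)*y^4 + (157/625)*y^5)*s := by nlinarith [mul_nonneg hQ hs0.le, sq_nonneg (((75263538/78125) + (205732961/156250)*y + (56548399/78125)*y^2 + (250191/1250)*y^3 + (17406/625)*y^4 + (39/25)*y^5) - ((4949434/15625) + (2482961/6250)*y + (3066353/15625)*y^2 + (1483521/31250)*y^3 + (3486/625)*y^4 + (157/625)*y^5)*s), sq_nonneg (((75263538/78125) + (205732961/156250)*y + (56548399/78125)*y^2 + (250191/1250)*y^3 + (17406/625)*y^4 + (39/25)*y^5) + ((4949434/15625) + (2482961/6250)*y + (3066353/15625)*y^2 + (1483521/31250)*y^3 + (3486/625)*y^4 + (157/625)*y^5)*s)]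
  have hEq : (((j:ℝ))+4)^3*(11*(((j:ℝ))+4)^2-11*(((j:ℝ))+4)+3) * up (((j:ℝ))+3) s + (((j:ℝ))+4)^3*(((j:ℝ))+3)^7 - up (((j:ℝ))+3) s * el (((j:ℝ))+4) s = ((75263538/78125) + (205732961/156250)*y + (56548399/78125)*y^2 + (250191/1250)*y^3 + (17406/625)*y^4 + (39/25)*y^5) - ((4949434/15625) + (2482961/6250)*y + (3066353/15625)*y^2 + (1483521/31250)*y^3 + (3486/625)*y^4 + (157/625)*y^5)*s := by
    simp only [up, el]
    linear_combination ((-325397804712/390625) + (-1013933171957/390625)*y + (-5669342993279/1562500)*y^2 + (-37453313433/12500)*y^3 + (-10116750661/6250)*y^4 + (-29888119/50)*y^5 + (-19102479/125)*y^6 + -26707*y^7 + (-6107/2)*y^8 + (-825/4)*y^9 + (-25/4)*y^10) * hs2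
  rw [hEq]; exact key

lemma lemK2 (j : ℕ) (s : ℝ) (hs2 : s^2 = 5) (hs0 : 0 < s) :
    0 < up (((j:ℝ))+4) s * el (((j:ℝ))+3) s - ((((j:ℝ))+4)^3*(11*(((j:ℝ))+4)^2-11*(((j:ℝ))+4)+3) * el (((j:ℝ))+3) s + (((j:ℝ))+4)^3*(((j:ℝ))+3)^7) := by
  set y : ℝ := (j : ℝ) with hy
  have hy0 : 0 ≤ y := Nat.cast_nonneg j
  have hP : (0:ℝ) < (6786462/78125) + (24827039/156250)*y + (18512577/156250)*y^2 + (55809/1250)*y^3 + (10563/1250)*y^4 + (16/25)*y^5 := by positivity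
  have hQ : (0:ℝ) ≤ (134064/15625) + (192711/6250)*y + (994581/31250)*y^2 + (452271/31250)*y^3 + (3847/1250)*y^4 + (157/625)*y^5 := by positivity
  have key : (0:ℝ) < ((6786462/78125) + (24827039/156250)*y + (18512577/156250)*y^2 + (55809/1250)*y^3 + (10563/1250)*y^4 + (16/25)*y^5) + ((134064/15625) + (192711/6250)*y + (994581/31250)*y^2 + (452271/31250)*y^3 + (3847/1250)*y^4 + (157/625)*y^5)*s := by nlinarith [mul_nonneg hQ hs0.le]
  have hEq : up (((j:ℝ))+4) s * el (((j:ℝ))+3) s - ((((j:ℝ))+4)^3*(11*(((j:ℝ))+4)^2-11*(((j:ℝ))+4)+3) * el (((j:ℝ))+3) s + (((j:ℝ))+4)^3*(((j:ℝ))+3)^7) = ((6786462/78125) + (24827039/156250)*y + (18512577/156250)*y^2 + (55809/1250)*y^3 + (10563/1250)*y^4 + (16/25)*y^5) + ((134064/15625) + (192711/6250)*y + (994581/31250)*y^2 + (452271/31250)*y^3 + (3847/1250)*y^4 + (157/625)*y^5)*s := by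
    simp only [up, el]
    linear_combination ((325397804712/390625) + (1013933171957/390625)*y + (5669342993279/1562500)*y^2 + (37453313433/12500)*y^3 + (10116750661/6250)*y^4 + (29888119/50)*y^5 + (19102479/125)*y^6 + 26707*y^7 + (6107/2)*y^8 + (825/4)*y^9 + (25/4)*y^10) * hs2
  rw [hEq]; exact key

lemma lemK3 (j : ℕ) (s : ℝ) (hs2 : s^2 = 5) (hs0 : 0 < s) :
    0 < el (((j:ℝ))+2) s := by
  set y : ℝ := (j : ℝ) with hy
  have hy0 : 0 ≤ y := Nat.cast_nonneg j
  have hP : (0:ℝ) < (501/5) + (14109/50)*y + (7926/25)*y^2 + (355/2)*y^3 + (99/2)*y^4 + (11/2)*y^5 := by positivity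
  have hQ : (0:ℝ) ≤ (28523/625) + (160523/1250)*y + (721/5)*y^2 + (807/10)*y^3 + (45/2)*y^4 + (5/2)*y^5 := by positivity
  have key : (0:ℝ) < ((501/5) + (14109/50)*y + (7926/25)*y^2 + (355/2)*y^3 + (99/2)*y^4 + (11/2)*y^5) + ((28523/625) + (160523/1250)*y + (721/5)*y^2 + (807/10)*y^3 + (45/2)*y^4 + (5/2)*y^5)*s := by nlinarith [mul_nonneg hQ hs0.le]
  have hEq : el (((j:ℝ))+2) s = ((501/5) + (14109/50)*y + (7926/25)*y^2 + (355/2)*y^3 + (99/2)*y^4 + (11/2)*y^5) + ((28523/625) + (160523/1250)*y + (721/5)*y^2 + (807/10)*y^3 + (45/2)*y^4 + (5/2)*y^5)*s := by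
    simp only [up, el]
    ring
  rw [hEq]; exact key

lemma lemK4 (j : ℕ) (s : ℝ) (hs2 : s^2 = 5) (hs0 : 0 < s) :
    0 < el (((j:ℝ))+4) s * (((j:ℝ))+3)^5 - up (((j:ℝ))+3) s * (((j:ℝ))+4)^5 := by
  set y : ℝ := (j : ℝ) with hy
  have hy0 : 0 ≤ y := Nat.cast_nonneg j
  have hP : (0:ℝ) < (2386102/25) + (11424519/50)*y + (11915263/50)*y^2 + (282909/2)*y^3 + (261378/5)*y^4 + (123177/10)*y^5 + (90369/50)*y^6 + 151*y^7 + (11/2)*y^8 := by positivity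
  have hQ : (0:ℝ) ≤ (1083354/25) + (129584977/1250)*y + (27023611/250)*y^2 + (16041571/250)*y^3 + (2964839/125)*y^4 + (6988533/1250)*y^5 + (8207/10)*y^6 + (343/5)*y^7 + (5/2)*y^8 := by positivity
  have key : (0:ℝ) < ((2386102/25) + (11424519/50)*y + (11915263/50)*y^2 + (282909/2)*y^3 + (261378/5)*y^4 + (123177/10)*y^5 + (90369/50)*y^6 + 151*y^7 + (11/2)*y^8) + ((1083354/25) + (129584977/1250)*y + (27023611/250)*y^2 + (16041571/250)*y^3 + (2964839/125)*y^4 + (6988533/1250)*y^5 + (8207/10)*y^6 + (343/5)*y^7 + (5/2)*y^8)*s := by nlinarith [mul_nonneg hQ hs0.le]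
  have hEq : el (((j:ℝ))+4) s * (((j:ℝ))+3)^5 - up (((j:ℝ))+3) s * (((j:ℝ))+4)^5 = ((2386102/25) + (11424519/50)*y + (11915263/50)*y^2 + (282909/2)*y^3 + (261378/5)*y^4 + (123177/10)*y^5 + (90369/50)*y^6 + 151*y^7 + (11/2)*y^8) + ((1083354/25) + (129584977/1250)*y + (27023611/250)*y^2 + (16041571/250)*y^3 + (2964839/125)*y^4 + (6988533/1250)*y^5 + (8207/10)*y^6 + (343/5)*y^7 + (5/2)*y^8)*s := by
    simp only [up, el]
    ring
  rw [hEq]; exact key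

lemma lemK6 (j : ℕ) (s : ℝ) (hs2 : s^2 = 5) (hs0 : 0 < s) :
    0 < (el (((j:ℝ))+4) s * (((j:ℝ))+3)^5 - up (((j:ℝ))+3) s * (((j:ℝ))+4)^5) * (el (((j:ℝ))+6) s * (((j:ℝ))+5)^5 - up (((j:ℝ))+5) s * (((j:ℝ))+6)^5) * el (((j:ℝ))+5) s * (((j:ℝ))+4)^5 - (up (((j:ℝ))+5) s * (((j:ℝ))+4)^5 - el (((j:ℝ))+4) s * (((j:ℝ))+5)^5)^2 * up (((j:ℝ))+3) s * (((j:ℝ))+6)^5 := by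
  set y : ℝ := (j : ℝ) with hy
  have hy0 : 0 ≤ y := Nat.cast_nonneg j
  have hP : (0:ℝ) < (73616131672466261820672/15625) + (10537195803302040247751936/390625)*y + (144144971985670219990122576/1953125)*y^2 + (50160630344598674698314664/390625)*y^3 + (311578954374884327563625664/1953125)*y^4 + (58829447485060507140259324/390625)*y^5 + (219270727241659205384344949/1953125)*y^6 + (264783297839921918840589383/3906250)*y^7 + (65891766877949340826207964/1953125)*y^8 + (2189423911628413279972907/156250)*y^9 + (1913483626054984656924191/390625)*y^10 + (5661978904320463374475317/3906250)*y^11 + (142263858871245512976584/390625)*y^12 + (30385321379486540296684/390625)*y^13 + (1102218037998800226361/78125)*y^14 + (1692283327888367764731/781250)*y^15 + (546801768160495558867/1953125)*y^16 + (4719131133634283273/156250)*y^17 + (209881614587108863/78125)*y^18 + (121004962615183/625)*y^19 + (6888377963689/625)*y^20 + (119242770977/250)*y^21 + (368632293/25)*y^22 + (1450254/5)*y^23 + 2728*y^24 := by positivity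
  have hQ : (0:ℝ) ≤ (4115272901493745434985728/1953125) + (117809595182862480518710016/9765625)*y + (1611591937328259094417144848/48828125)*y^2 + (2804068094549611338634963912/48828125)*y^3 + (5573700724043794128268976/78125)*y^4 + (657734014149806819874303516/9765625)*y^5 + (2451524149662753301631288829/48828125)*y^6 + (2960370682493872354484082383/97656250)*y^7 + (147338636762626966578983208/9765625)*y^8 + (122392653888209472471206953/19531250)*y^9 + (106967104223709832205522293/48828125)*y^10 + (63302917479989795171896537/97656250)*y^11 + (1590560011907906867873412/9765625)*y^12 + (339718584633257072886549/9765625)*y^13 + (61615927158759033713051/9765625)*y^14 + (94601614436943861822781/97656250)*y^15 + (48907488776808578491/390625)*y^16 + (10552309177964768033/781250)*y^17 + (18772402163592091/15625)*y^18 + (1352878042928213/15625)*y^19 + (15402897721037/3125)*y^20 + (266635225249/1250)*y^21 + (164857549/25)*y^22 + (648574/5)*y^23 + 1220*y^24 := by positivity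
  have key : (0:ℝ) < ((73616131672466261820672/15625) + (10537195803302040247751936/390625)*y + (144144971985670219990122576/1953125)*y^2 + (50160630344598674698314664/390625)*y^3 + (311578954374884327563625664/1953125)*y^4 + (58829447485060507140259324/390625)*y^5 + (219270727241659205384344949/1953125)*y^6 + (264783297839921918840589383/3906250)*y^7 + (65891766877949340826207964/1953125)*y^8 + (2189423911628413279972907/156250)*y^9 + (1913483626054984656924191/390625)*y^10 + (5661978904320463374475317/3906250)*y^11 + (142263858871245512976584/390625)*y^12 + (30385321379486540296684/390625)*y^13 + (1102218037998800226361/78125)*y^14 + (1692283327888367764731/781250)*y^15 + (546801768160495558867/1953125)*y^16 + (4719131133634283273/156250)*y^17 + (209881614587108863/78125)*y^18 + (121004962615183/625)*y^19 + (6888377963689/625)*y^20 + (119242770977/250)*y^21 + (368632293/25)*y^22 + (1450254/5)*y^23 + 2728*y^24) + ((4115272901493745434985728/1953125) + (117809595182862480518710016/9765625)*y + (1611591937328259094417144848/48828125)*y^2 + (2804068094549611338634963912/48828125)*y^3 + (5573700724043794128268976/78125)*y^4 + (657734014149806819874303516/9765625)*y^5 + (2451524149662753301631288829/48828125)*y^6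 + (2960370682493872354484082383/97656250)*y^7 + (147338636762626966578983208/9765625)*y^8 + (122392653888209472471206953/19531250)*y^9 + (106967104223709832205522293/48828125)*y^10 + (63302917479989795171896537/97656250)*y^11 + (1590560011907906867873412/9765625)*y^12 + (339718584633257072886549/9765625)*y^13 + (61615927158759033713051/9765625)*y^14 + (94601614436943861822781/97656250)*y^15 + (48907488776808578491/390625)*y^16 + (10552309177964768033/781250)*y^17 + (18772402163592091/15625)*y^18 + (1352878042928213/15625)*y^19 + (15402897721037/3125)*y^20 + (266635225249/1250)*y^21 + (164857549/25)*y^22 + (648574/5)*y^23 + 1220*y^24)*s := by nlinarith [mul_nonneg hQ hs0.le]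
  have hEq : (el (((j:ℝ))+4) s * (((j:ℝ))+3)^5 - up (((j:ℝ))+3) s * (((j:ℝ))+4)^5) * (el (((j:ℝ))+6) s * (((j:ℝ))+5)^5 - up (((j:ℝ))+5) s * (((j:ℝ))+6)^5) * el (((j:ℝ))+5) s * (((j:ℝ))+4)^5 - (up (((j:ℝ))+5) s * (((j:ℝ))+4)^5 - el (((j:ℝ))+4) s * (((j:ℝ))+5)^5)^2 * up (((j:ℝ))+3) s * (((j:ℝ))+6)^5 = ((73616131672466261820672/15625) + (10537195803302040247751936/390625)*y + (144144971985670219990122576/1953125)*y^2 + (50160630344598674698314664/390625)*y^3 + (311578954374884327563625664/1953125)*y^4 + (58829447485060507140259324/390625)*y^5 + (219270727241659205384344949/1953125)*y^6 + (264783297839921918840589383/3906250)*y^7 + (65891766877949340826207964/1953125)*y^8 + (2189423911628413279972907/156250)*y^9 + (1913483626054984656924191/390625)*y^10 + (5661978904320463374475317/3906250)*y^11 + (142263858871245512976584/390625)*y^12 + (30385321379486540296684/390625)*y^13 + (1102218037998800226361/78125)*y^14 + (1692283327888367764731/781250)*y^15 + (546801768160495558867/1953125)*y^16 + (4719131133634283273/156250)*y^17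 + (209881614587108863/78125)*y^18 + (121004962615183/625)*y^19 + (6888377963689/625)*y^20 + (119242770977/250)*y^21 + (368632293/25)*y^22 + (1450254/5)*y^23 + 2728*y^24) + ((4115272901493745434985728/1953125) + (117809595182862480518710016/9765625)*y + (1611591937328259094417144848/48828125)*y^2 + (2804068094549611338634963912/48828125)*y^3 + (5573700724043794128268976/78125)*y^4 + (657734014149806819874303516/9765625)*y^5 + (2451524149662753301631288829/48828125)*y^6 + (2960370682493872354484082383/97656250)*y^7 + (147338636762626966578983208/9765625)*y^8 + (122392653888209472471206953/19531250)*y^9 + (106967104223709832205522293/48828125)*y^10 + (63302917479989795171896537/97656250)*y^11 + (1590560011907906867873412/9765625)*y^12 + (339718584633257072886549/9765625)*y^13 + (61615927158759033713051/9765625)*y^14 + (94601614436943861822781/97656250)*y^15 + (48907488776808578491/390625)*y^16 + (10552309177964768033/781250)*y^17 + (18772402163592091/15625)*y^18 + (1352878042928213/15625)*y^19 + (15402897721037/3125)*y^20 + (266635225249/1250)*y^21 + (164857549/25)*y^22 + (648574/5)*y^23 + 1220*y^24)*s := by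
    simp only [up, el]
    linear_combination (((55718642010047576806272/78125) + (7973863287007040071391936/1953125)*y + (109061618305711959892275576/9765625)*y^2 + (37946771903730311143471264/1953125)*y^3 + (235683167895939259743543914/9765625)*y^4 + (44495052081743582545491674/1953125)*y^5 + (165829161670226226636098074/9765625)*y^6 + (100117501088172887477173504/9765625)*y^7 + (199303432824177070536994981/39062500)*y^8 + (3311022177324996044387109/1562500)*y^9 + (5787211737229167534132639/7812500)*y^10 + (4280934256532447280624067/19531250)*y^11 + (215121306696688756844893/3906250)*y^12 + (91891150962266349145061/7812500)*y^13 + (3333270465016812550299/1562500)*y^14 + (2558828586088574759787/7812500)*y^15 + (413394564183379122617/9765625)*y^16 + (3567755473328989063/781250)*y^17 + (317348825665091791/781250)*y^18 + (91482135021102/3125)*y^19 + (20831075476041/12500)*y^20 + (36060298691/500)*y^21 + (111479241/50)*y^22 + 43858*y^23 + (825/2)*y^24) + ((1057649583820022686729728/9765625) + (30260027813455126545374016/48828125)*y + (413739624070456666896258848/244140625)*y^2 + (719575591577795310563821412/244140625)*y^3 + (7148998997391446505070914/1953125)*y^4 + (168674559962954671845293616/48828125)*y^5 + (1257053640349648266168992533/488281250)*y^6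 + (1517643974711985808015753891/976562500)*y^7 + (151040013555789725848241657/195312500)*y^8 + (15681067114462818534772914/48828125)*y^9 + (109624316906429665113255297/976562500)*y^10 + (32434470112942218657174699/976562500)*y^11 + (407444302759303626696612/48828125)*y^12 + (348072851570318260686521/195312500)*y^13 + (63128153537724717628829/195312500)*y^14 + (24230014029906496225531/488281250)*y^15 + (12526234395119380127/1953125)*y^16 + (5405267071663629087/7812500)*y^17 + (4807927364504668/78125)*y^18 + (69299253254251/15625)*y^19 + (631200425401/2500)*y^20 + (1365840949/125)*y^21 + (1689008/5)*y^22 + 6645*y^23 + (125/2)*y^24)*s) * hs2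
  rw [hEq]; exact key

lemma aperyB_pos (n : ℕ) : 0 < aperyB n := by
  have h : 0 < (Nat.choose n 0)^2 * Nat.choose (n+0) 0 := by simp
  exact Finset.sum_pos' (fun i _ => Nat.zero_le _)
    ⟨0, Finset.mem_range.mpr (by omega), h⟩

lemma Br_pos (n : ℕ) : 0 < Br n := by
  have := aperyB_pos n
  unfold Br
  exact_mod_cast this

lemma recR (n : ℕ) : ((n:ℝ)+2)^2 * Br (n+2)
    = (11*(n:ℝ)^2+33*(n:ℝ)+25) * Br (n+1) + ((n:ℝ)+1)^2 * Br n := by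
  have h := recN n
  have : (((n+2)^2 * aperyB (n+2) : ℕ) : ℝ) = (((11*n^2+33*n+25) * aperyB (n+1) + (n+1)^2 * aperyB n : ℕ) : ℝ) :=
    congrArg (Nat.cast : ℕ → ℝ) h
  push_cast at this
  unfold Br
  linarith

lemma aperyB2 : aperyB 2 = 19 := by decide
lemma aperyB3 : aperyB 3 = 147 := by decide

lemma s_bounds {s : ℝ} (hs2 : s^2 = 5) (hs0 : 0 < s) : 2.2360 < s ∧ s < 2.23607 := by
  constructor <;> nlinarith

lemma invariant (s : ℝ) (hs2 : s^2 = 5) (hs0 : 0 < s) (j : ℕ) :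
    el ((j:ℝ)+3) s * Br (j+2) ≤ ((j:ℝ)+3)^5 * Br (j+3) ∧
      ((j:ℝ)+3)^5 * Br (j+3) ≤ up ((j:ℝ)+3) s * Br (j+2) := by
  induction j with
  | zero =>
    obtain ⟨hlo, hhi⟩ := s_bounds hs2 hs0
    have hB2 : Br 2 = 19 := by unfold Br; rw [aperyB2]; norm_num
    have hB3 : Br 3 = 147 := by unfold Br; rw [aperyB3]; norm_num
    have hel : el 3 s = 23298/25 + 264972/625*s := by simp only [el]; ring
    have hup : up 3 s = 23298/25 + 1/5 + 264972/625*s := by simp only [up, hel]; ring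
    norm_num [hB2, hB3, hel, hup]
    constructor <;> nlinarith
  | succ j ih =>
    obtain ⟨ihL, ihU⟩ := ih
    set y : ℝ := (j:ℝ) with hy
    have hBr2 : 0 < Br (j+2) := Br_pos _
    have hBr3 : 0 < Br (j+3) := Br_pos _
    have hBr4 : 0 < Br (j+4) := Br_pos _
    have helP : 0 < el (y+3) s := by
      have := lemK3 (j+1) s hs2 hs0; push_cast at this
      have e : (j:ℝ)+1+2 = y+3 := by ring
      rw [e] at this; exact this
    have helP4 : 0 < el (y+4) s := by
      have := lemK3 (j+2) s hs2 hs0; push_cast at this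
      have e : (j:ℝ)+2+2 = y+4 := by ring
      rw [e] at this; exact this
    have hupP : 0 < up (y+3) s := by simp only [up]; linarith
    have hupP4 : 0 < up (y+4) s := by simp only [up]; linarith
    have hrec : ((y+2)+2)^2 * Br (j+4) = (11*(y+2)^2+33*(y+2)+25) * Br (j+3) + ((y+2)+1)^2 * Br (j+2) := by
      have := recR (j+2); push_cast at this
      have e1 : (j:ℝ)+2+2 = y+2+2 := by ring
      have e2 : 11*((j:ℝ)+2)^2+33*((j:ℝ)+2)+25 = 11*(y+2)^2+33*(y+2)+25 := by ring
      have e3 : (j:ℝ)+2+1 = y+2+1 := by ring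
      rw [e1, e2, e3] at this; exact this
    have hrec' : (y+4)^2 * Br (j+4) = (11*(y+4)^2-11*(y+4)+3) * Br (j+3) + (y+3)^2 * Br (j+2) := by
      rw [show (11*(y+4)^2-11*(y+4)+3) = (11*(y+2)^2+33*(y+2)+25) from by ring,
        show (y+4)^2 = ((y+2)+2)^2 from by ring, show (y+3)^2 = ((y+2)+1)^2 from by ring]
      exact hrec
    have hK1 := lemK1 j s hs2 hs0
    have hK2 := lemK2 j s hs2 hs0
    -- lower bound at j+1
    have low : el (y+4) s * Br (j+3) ≤ (y+4)^5 * Br (j+4) := by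
      have step1 : (y+3)^2 * ((y+4)^3 * ((y+3)^5 * Br (j+3))) ≤ (y+3)^2 * ((y+4)^3 * (up (y+3) s * Br (j+2))) := by
        apply mul_le_mul_of_nonneg_left _ (by positivity)
        apply mul_le_mul_of_nonneg_left ihU (by positivity)
      have expand : up (y+3) s * ((y+4)^5 * Br (j+4))
          = (y+4)^3 * (11*(y+4)^2-11*(y+4)+3) * up (y+3) s * Br (j+3)
            + up (y+3) s * ((y+3)^2 * ((y+4)^3 * Br (j+2))) := by
        have : (y+4)^5 * Br (j+4) = (y+4)^3 * ((y+4)^2 * Br (j+4)) := by ring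
        rw [this, hrec']; ring
      have key : up (y+3) s * (el (y+4) s * Br (j+3)) ≤ up (y+3) s * ((y+4)^5 * Br (j+4)) := by
        rw [expand]
        have h2 : up (y+3) s * ((y+3)^2 * ((y+4)^3 * Br (j+2)))
            ≥ (y+4)^3 * ((y+3)^7 * Br (j+3)) := by nlinarith [step1]
        nlinarith [mul_pos hBr3 (mul_pos hupP helP4), hBr3, mul_le_mul_of_nonneg_right hK1.le hBr3.le]
      exact le_of_mul_le_mul_left key hupP
    -- upper bound at j+1
    have high : (y+4)^5 * Br (j+4) ≤ up (y+4) s * Br (j+3) := by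
      have step1 : el (y+3) s * Br (j+2) ≤ (y+3)^5 * Br (j+3) := ihL
      have key : el (y+3) s * ((y+4)^5 * Br (j+4)) ≤ el (y+3) s * (up (y+4) s * Br (j+3)) := by
        have expand : el (y+3) s * ((y+4)^5 * Br (j+4))
            = (y+4)^3 * (11*(y+4)^2-11*(y+4)+3) * el (y+3) s * Br (j+3)
              + (y+4)^3 * (y+3)^2 * (el (y+3) s * Br (j+2)) := by
          have : (y+4)^5 * Br (j+4) = (y+4)^3 * ((y+4)^2 * Br (j+4)) := by ring
          rw [this, hrec']; ring
        rw [expand]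
        have h2 : (y+4)^3 * (y+3)^2 * (el (y+3) s * Br (j+2)) ≤ (y+4)^3 * ((y+3)^7 * Br (j+3)) := by
          nlinarith [mul_le_mul_of_nonneg_left step1 (show (0:ℝ) ≤ (y+4)^3*(y+3)^2 by positivity)]
        nlinarith [mul_le_mul_of_nonneg_right hK2.le hBr3.le]
      exact le_of_mul_le_mul_left key helP
    constructor
    · have : ((j+1:ℕ):ℝ) = y + 1 := by push_cast; ring
      rw [this, show y+1+3 = y+4 from by ring, show (j+1)+2 = j+3 from rfl, show (j+1)+3 = j+4 from rfl]
      exact low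
    · have : ((j+1:ℕ):ℝ) = y + 1 := by push_cast; ring
      rw [this, show y+1+3 = y+4 from by ring, show (j+1)+2 = j+3 from rfl, show (j+1)+3 = j+4 from rfl]
      exact high


lemma final (s : ℝ) (hs2 : s^2 = 5) (hs0 : 0 < s) (m : ℕ) :
    (Br (m+3) * Br (m+5) - Br (m+4)^2)^2
      < (Br (m+2) * Br (m+4) - Br (m+3)^2) * (Br (m+4) * Br (m+6) - Br (m+5)^2) := by
  set y : ℝ := (m:ℝ) with hy
  have hb0 := Br_pos (m+2); have hb1 := Br_pos (m+3); have hb2 := Br_pos (m+4)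
  have hb3 := Br_pos (m+5); have hb4 := Br_pos (m+6)
  set b0 := Br (m+2); set b1 := Br (m+3); set b2 := Br (m+4); set b3 := Br (m+5); set b4 := Br (m+6)
  -- invariant instances with rewritten indices
  obtain ⟨hL0, hU0⟩ := invariant s hs2 hs0 m
  obtain ⟨hL1, hU1⟩ := invariant s hs2 hs0 (m+1)
  obtain ⟨hL2, hU2⟩ := invariant s hs2 hs0 (m+2)
  obtain ⟨hL3, hU3⟩ := invariant s hs2 hs0 (m+3)
  push_cast at hL1 hU1 hL2 hU2 hL3 hU3
  rw [show (y+1)+3 = y+4 from by ring, show (m+1)+2 = m+3 from rfl, show (m+1)+3 = m+4 from rfl] at hL1 hU1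
  rw [show (y+2)+3 = y+5 from by ring, show (m+2)+2 = m+4 from rfl, show (m+2)+3 = m+5 from rfl] at hL2 hU2
  rw [show (y+3)+3 = y+6 from by ring, show (m+3)+2 = m+5 from rfl, show (m+3)+3 = m+6 from rfl] at hL3 hU3
  -- K lemmas
  have hA0 := lemK4 m s hs2 hs0
  have hA1 := lemK4 (m+1) s hs2 hs0
  have hA2 := lemK4 (m+2) s hs2 hs0
  have hK6 := lemK6 m s hs2 hs0
  push_cast at hA1 hA2
  rw [show (y+1)+4 = y+5 from by ring, show (y+1)+3 = y+4 from by ring] at hA1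
  rw [show (y+2)+4 = y+6 from by ring, show (y+2)+3 = y+5 from by ring] at hA2
  have helP2 : 0 < el (y+5) s := by
    have := lemK3 (m+3) s hs2 hs0; push_cast at this
    rw [show (y+3)+2 = y+5 from by ring] at this; exact this
  have helP0 : 0 < el (y+3) s := by
    have := lemK3 (m+1) s hs2 hs0; push_cast at this
    rw [show (y+1)+2 = y+3 from by ring] at this; exact this
  have hupP0 : 0 < up (y+3) s := by simp only [up]; linarith
  have hupP2 : 0 < up (y+5) s := by
    have := lemK3 (m+3) s hs2 hs0; push_cast at this
    rw [show (y+3)+2 = y+5 from by ring] at this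
    simp only [up]; linarith
  have hW : 0 < up (y+5) s * (y+4)^5 - el (y+4) s * (y+5)^5 := by
    have e4 : (0:ℝ) ≤ (y+4)^5 := by positivity
    have e5 : (0:ℝ) ≤ (y+5)^5 := by positivity
    have u1 : up (y+5) s * (y+4)^5 = el (y+5) s * (y+4)^5 + 1/5*(y+4)^5 := by
      simp only [up]; ring
    have u2 : up (y+4) s * (y+5)^5 = el (y+4) s * (y+5)^5 + 1/5*(y+5)^5 := by
      simp only [up]; ring
    linarith [hA1, u1, u2, e4, e5]
  -- f1
  have f1 : (el (y+4) s * (y+3)^5 - up (y+3) s * (y+4)^5) * (b0*b1)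
      ≤ (y+3)^5*(y+4)^5 * (b0*b2 - b1^2) := by
    have t1 := mul_le_mul_of_nonneg_left hL1 (show (0:ℝ) ≤ (y+3)^5*b0 by positivity)
    have t2 := mul_le_mul_of_nonneg_left hU0 (show (0:ℝ) ≤ (y+4)^5*b1 by positivity)
    linarith [t1, t2]
  have f2 : (el (y+6) s * (y+5)^5 - up (y+5) s * (y+6)^5) * (b2*b3)
      ≤ (y+5)^5*(y+6)^5 * (b2*b4 - b3^2) := by
    have t1 := mul_le_mul_of_nonneg_left hL3 (show (0:ℝ) ≤ (y+5)^5*b2 by positivity)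
    have t2 := mul_le_mul_of_nonneg_left hU2 (show (0:ℝ) ≤ (y+6)^5*b3 by positivity)
    linarith [t1, t2]
  have f1' : (el (y+5) s * (y+4)^5 - up (y+4) s * (y+5)^5) * (b1*b2)
      ≤ (y+4)^5*(y+5)^5 * (b1*b3 - b2^2) := by
    have t1 := mul_le_mul_of_nonneg_left hL2 (show (0:ℝ) ≤ (y+4)^5*b1 by positivity)
    have t2 := mul_le_mul_of_nonneg_left hU1 (show (0:ℝ) ≤ (y+5)^5*b2 by positivity)
    linarith [t1, t2]
  have f3 : (y+4)^5*(y+5)^5 * (b1*b3 - b2^2) ≤ (up (y+5) s * (y+4)^5 - el (y+4) s * (y+5)^5) * (b1*b2) := by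
    have t3 := mul_le_mul_of_nonneg_left hU2 (show (0:ℝ) ≤ (y+4)^5*b1 by positivity)
    have t4 := mul_le_mul_of_nonneg_left hL1 (show (0:ℝ) ≤ (y+5)^5*b2 by positivity)
    linarith [t3, t4]
  have f3pos : 0 < (y+4)^5*(y+5)^5 * (b1*b3 - b2^2) := by
    have := mul_pos hA1 (mul_pos hb1 hb2)
    linarith [f1']
  have f4 : (y+3)^5 * el (y+5) s * (b1*b2) ≤ up (y+3) s * (y+5)^5 * (b0*b3) := by
    have t5 : ((y+3)^5*b1) * (el (y+5) s * b2) ≤ (up (y+3) s * b0) * ((y+5)^5*b3) :=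
      mul_le_mul hU0 hL2 (by positivity) (by positivity)
    linarith [t5]
  -- g1 : product of f1 and f2
  have g1 : ((el (y+4) s * (y+3)^5 - up (y+3) s * (y+4)^5) * (b0*b1))
        * ((el (y+6) s * (y+5)^5 - up (y+5) s * (y+6)^5) * (b2*b3))
      ≤ ((y+3)^5*(y+4)^5 * (b0*b2 - b1^2)) * ((y+5)^5*(y+6)^5 * (b2*b4 - b3^2)) := by
    apply mul_le_mul f1 f2 (le_of_lt (mul_pos hA2 (mul_pos hb2 hb3)))
    exact le_trans (le_of_lt (mul_pos hA0 (mul_pos hb0 hb1))) f1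
  -- g3 : squares
  have g3 : ((y+4)^5*(y+5)^5 * (b1*b3 - b2^2))^2
      ≤ ((up (y+5) s * (y+4)^5 - el (y+4) s * (y+5)^5) * (b1*b2))^2 := by
    apply pow_le_pow_left₀ (le_of_lt f3pos) f3
  -- master scaled
  have hK6' : ((up (y+5) s * (y+4)^5 - el (y+4) s * (y+5)^5))^2 * up (y+3) s * (y+6)^5 * ((y+3)^5 * (b1*b2)^2)
      < (el (y+4) s * (y+3)^5 - up (y+3) s * (y+4)^5) * (el (y+6) s * (y+5)^5 - up (y+5) s * (y+6)^5) * el (y+5) s * (y+4)^5 * ((y+3)^5 * (b1*b2)^2) := by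
    have hpos := mul_pos (pow_pos (show (0:ℝ) < y+3 by positivity) 5) (pow_pos (mul_pos hb1 hb2) 2)
    have h := mul_lt_mul_of_pos_right hK6 hpos
    linarith [h]
  -- chain: define c := up0*(y+3)^5*(y+4)^10*(y+5)^10*(y+6)^5
  have step1 : up (y+3) s * (y+6)^5 * (y+3)^5 * ((y+4)^5*(y+5)^5 * (b1*b3 - b2^2))^2
      ≤ up (y+3) s * (y+6)^5 * (y+3)^5 * ((up (y+5) s * (y+4)^5 - el (y+4) s * (y+5)^5) * (b1*b2))^2 := by
    apply mul_le_mul_of_nonneg_left g3 (by positivity)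
  have step3 : (el (y+4) s * (y+3)^5 - up (y+3) s * (y+4)^5) * (el (y+6) s * (y+5)^5 - up (y+5) s * (y+6)^5) * (y+4)^5 * (b1*b2) * ((y+3)^5 * el (y+5) s * (b1*b2))
      ≤ (el (y+4) s * (y+3)^5 - up (y+3) s * (y+4)^5) * (el (y+6) s * (y+5)^5 - up (y+5) s * (y+6)^5) * (y+4)^5 * (b1*b2) * (up (y+3) s * (y+5)^5 * (b0*b3)) := by
    apply mul_le_mul_of_nonneg_left f4
    have h45 : (0:ℝ) < (y+4)^5 := by positivity
    have := mul_pos (mul_pos (mul_pos hA0 hA2) h45) (mul_pos hb1 hb2)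
    linarith
  have step4 : up (y+3) s * (y+4)^5 * (y+5)^5 * (((el (y+4) s * (y+3)^5 - up (y+3) s * (y+4)^5) * (b0*b1)) * ((el (y+6) s * (y+5)^5 - up (y+5) s * (y+6)^5) * (b2*b3)))
      ≤ up (y+3) s * (y+4)^5 * (y+5)^5 * (((y+3)^5*(y+4)^5 * (b0*b2 - b1^2)) * ((y+5)^5*(y+6)^5 * (b2*b4 - b3^2))) := by
    apply mul_le_mul_of_nonneg_left g1 (by positivity)
  -- combine everything
  have main : up (y+3) s * (y+3)^5 * (y+4)^10 * (y+5)^10 * (y+6)^5 * ((b1*b3 - b2^2)^2)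
      < up (y+3) s * (y+3)^5 * (y+4)^10 * (y+5)^10 * (y+6)^5 * ((b0*b2 - b1^2) * (b2*b4 - b3^2)) := by
    linarith [step1, hK6', step3, step4]
  have hc : 0 < up (y+3) s * (y+3)^5 * (y+4)^10 * (y+5)^10 * (y+6)^5 := by positivity
  exact lt_of_mul_lt_mul_left main (le_of_lt hc)


lemma aB0 : aperyB 0 = 1 := by decide
lemma aB1 : aperyB 1 = 3 := by decide
lemma aB4 : aperyB 4 = 1251 := by decide
lemma aB5 : aperyB 5 = 11253 := by decide

end AperyAux

theorem aperyB_strict_two_log_convex (n : ℕ) (hn : 1 ≤ n) :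
    ((aperyB (n - 1) : ℤ) * aperyB (n + 1) - (aperyB n : ℤ) ^ 2) *
        ((aperyB (n + 1) : ℤ) * aperyB (n + 3) - (aperyB (n + 2) : ℤ) ^ 2) >
      ((aperyB n : ℤ) * aperyB (n + 2) - (aperyB (n + 1) : ℤ) ^ 2) ^ 2 := by
  rcases Nat.lt_or_ge n 3 with hlt | hge
  case inl =>
    have h12 : n = 1 ∨ n = 2 := by omega
    rcases h12 with rfl | rfl
    · norm_num [AperyAux.aB0, AperyAux.aB1, AperyAux.aperyB2, AperyAux.aperyB3, AperyAux.aB4]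
    · norm_num [AperyAux.aB1, AperyAux.aperyB2, AperyAux.aperyB3, AperyAux.aB4, AperyAux.aB5]
  case inr =>
    obtain ⟨m, rfl⟩ := Nat.exists_eq_add_of_le hge
    have hs2 : (Real.sqrt 5)^2 = 5 := Real.sq_sqrt (by norm_num)
    have hs0 : 0 < Real.sqrt 5 := Real.sqrt_pos.mpr (by norm_num)
    have h := AperyAux.final (Real.sqrt 5) hs2 hs0 m
    simp only [AperyAux.Br] at h
    have e1 : 3+m-1 = m+2 := by omega
    have e2 : 3+m+1 = m+4 := by omega
    have e3 : 3+m+2 = m+5 := by omega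
    have e4 : 3+m+3 = m+6 := by omega
    have e5 : 3+m = m+3 := by omega
    rw [e1, e2, e3, e4, e5]
    have hZ : (((aperyB (m+3) : ℤ) * aperyB (m+5) - (aperyB (m+4) : ℤ)^2)^2 : ℤ)
        < ((aperyB (m+2) : ℤ) * aperyB (m+4) - (aperyB (m+3) : ℤ)^2) *
          ((aperyB (m+4) : ℤ) * aperyB (m+6) - (aperyB (m+5) : ℤ)^2) := by
      have hcast : ((((aperyB (m+3) : ℤ) * aperyB (m+5) - (aperyB (m+4) : ℤ)^2)^2 : ℤ) : ℝ)
          < ((((aperyB (m+2) : ℤ) * aperyB (m+4) - (aperyB (m+3) : ℤ)^2) *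
            ((aperyB (m+4) : ℤ) * aperyB (m+6) - (aperyB (m+5) : ℤ)^2) : ℤ) : ℝ) := by
        push_cast
        convert h using 2 <;> push_cast <;> ring
      exact_mod_cast hcast
    exact hZ
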